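/- Let μ ∈ ℤʳ and let α̂ ∈ Φ̃₊^{(n)} be a positive affine root with ⟨α̂, μ⟩ < 0. Then s_{α̂}μ is strictly less than μ in the partial order ≤ₙ. Conversely, if s_{α̂}μ <ₙ μ, then ⟨α̂, μ⟩ < 0. -/

import Mathlib

/-- The permutation of ℤʳ induced by swapping coordinates a and b. -/
def swapPerm (r : ℕ) (a b : Fin (r + 2)) : Equiv.Perm (Fin (r + 2) → ℤ) :=
  Equiv.piCongrLeft' (fun _ => ℤ) (Equiv.swap a b)

/-- The affine generator s₀⁽ⁿ⁾. -/
def affPerm (r : ℕ) (n : ℤ) : Equiv.Perm (Fin (r + 2) → ℤ) :=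
  Function.Involutive.toPerm
    (fun f j => if j = 0 then f (Fin.last (r + 1)) + n
      else if j = Fin.last (r + 1) then f 0 - n else f j)
    (by
      intro f; funext j
      have hne : (Fin.last (r + 1) : Fin (r + 2)) ≠ 0 := by simp [Fin.ext_iff]
      by_cases h0 : j = 0
      · subst h0; simp [hne]
      · by_cases h1 : j = Fin.last (r + 1)
        · subst h1; simp [hne, h0]
        · simp [h0, h1])

/-- The simple generators of W⁽ⁿ⁾_Cox = nQ ⋊ S_r acting affinely on ℤʳ. -/
def gen (r : ℕ) (n : ℤ) (i : Fin (r + 2)) : Equiv.Perm (Fin (r + 2) → ℤ) :=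
  if i = 0 then affPerm r n else swapPerm r (i - 1) i

/-- A⁽ⁿ⁾ = {λ ∈ ℤʳ : λ₁ ≥ ⋯ ≥ λ_r, λ₁ − λ_r ≤ n}. -/
def inA (r : ℕ) (n : ℤ) (lam : Fin (r + 2) → ℤ) : Prop :=
  (∀ i j : Fin (r + 2), i ≤ j → lam j ≤ lam i) ∧ lam 0 - lam (Fin.last (r + 1)) ≤ n

/-- `l` is a reduced word for the group element `w` of W⁽ⁿ⁾_Cox. -/
def isReducedWordOf (r : ℕ) (n : ℤ) (l : List (Fin (r + 2)))
    (w : Equiv.Perm (Fin (r + 2) → ℤ)) : Prop :=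
  (l.map (gen r n)).prod = w ∧
    ∀ l' : List (Fin (r + 2)), (l'.map (gen r n)).prod = w → l.length ≤ l'.length

/-- The Bruhat order on W⁽ⁿ⁾_Cox, via the subword characterization: w' ≤ w iff w' is
represented by a subword of a reduced expression of w. -/
def bruhatLE (r : ℕ) (n : ℤ) (w' w : Equiv.Perm (Fin (r + 2) → ℤ)) : Prop :=
  ∃ l : List (Fin (r + 2)), isReducedWordOf r n l w ∧
    ∃ l' : List (Fin (r + 2)), l'.Sublist l ∧ (l'.map (gen r n)).prod = w'

/-- `l` is a word of minimal length among words of W⁽ⁿ⁾_Cox taking λ to μ; its product is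
then (a reduced expression of) the shortest element w with wλ = μ. -/
def isMinWordTo (r : ℕ) (n : ℤ) (lam μ : Fin (r + 2) → ℤ) (l : List (Fin (r + 2))) : Prop :=
  ((l.map (gen r n)).prod) lam = μ ∧
    ∀ l' : List (Fin (r + 2)), ((l'.map (gen r n)).prod) lam = μ → l.length ≤ l'.length

/-- The partial order ≤ₙ on ℤʳ: ν ≤ₙ μ iff λ_ν = λ_μ (the common element of A⁽ⁿ⁾) and
w_ν ≤ w_μ in the Bruhat order, where w_ν, w_μ are the shortest elements with
w_ν λ = ν, w_μ λ = μ. -/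
def leN (r : ℕ) (n : ℤ) (ν μ : Fin (r + 2) → ℤ) : Prop :=
  ∃ (lam : Fin (r + 2) → ℤ) (lν lμ : List (Fin (r + 2))),
    inA r n lam ∧ isMinWordTo r n lam ν lν ∧ isMinWordTo r n lam μ lμ ∧
      bruhatLE r n ((lν.map (gen r n)).prod) ((lμ.map (gen r n)).prod)

/-- The affine reflection s_{α̂} for α̂ = n(ε_a − ε_b) + sn²δ: s_{α̂} v = s_α v − snα. -/
def reflAff (r : ℕ) (n : ℤ) (a b : Fin (r + 2)) (s : ℤ) (v : Fin (r + 2) → ℤ) :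
    Fin (r + 2) → ℤ :=
  fun j => (v ∘ Equiv.swap a b) j - s * n * (if j = a then 1 else if j = b then -1 else 0)

namespace Stmt10


variable {r : ℕ}

structure Rt (r : ℕ) where
  a : Fin (r + 2)
  b : Fin (r + 2)
  s : ℤ

def pairR (n : ℤ) (β : Rt r) (v : Fin (r + 2) → ℤ) : ℤ := v β.a - v β.b + β.s * n

def posR (β : Rt r) : Prop := 0 < β.s ∨ (β.s = 0 ∧ β.a < β.b)

def wfR (β : Rt r) : Prop := β.a ≠ β.b

def reflRt (n : ℤ) (β : Rt r) (v : Fin (r + 2) → ℤ) : Fin (r + 2) → ℤ :=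
  fun j => v (Equiv.swap β.a β.b j) - β.s * n * (if j = β.a then 1 else if j = β.b then -1 else 0)

/-- linear part of generator i -/
def sg (r : ℕ) (i : Fin (r + 2)) : Equiv.Perm (Fin (r + 2)) :=
  if i = 0 then Equiv.swap 0 (Fin.last (r + 1)) else Equiv.swap (i - 1) i

/-- translation part of generator i (times n) -/
def tg (r : ℕ) (i : Fin (r + 2)) (j : Fin (r + 2)) : ℤ :=
  if i = 0 then (if j = 0 then 1 else if j = Fin.last (r + 1) then -1 else 0) else 0

lemma last_ne_zero : (Fin.last (r + 1) : Fin (r + 2)) ≠ 0 := by simp [Fin.ext_iff]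

lemma gen_apply (n : ℤ) (i : Fin (r + 2)) (v : Fin (r + 2) → ℤ) (j : Fin (r + 2)) :
    gen r n i v j = v (sg r i j) + n * tg r i j := by
  by_cases h0 : i = 0
  · subst h0
    simp only [gen, if_pos rfl, affPerm, Function.Involutive.coe_toPerm, Function.Involutive.toPerm, Equiv.coe_fn_mk, sg, tg, if_pos rfl]
    by_cases hj0 : j = 0
    · subst hj0; simp [Equiv.swap_apply_left]; try ring
    · by_cases hjL : j = Fin.last (r + 1)
      · subst hjL; simp [hj0, Equiv.swap_apply_right, last_ne_zero]; try ring
      · simp [hj0, hjL, Equiv.swap_apply_of_ne_of_ne hj0 hjL]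
  · simp only [gen, if_neg h0, swapPerm, sg, if_neg h0, tg, if_neg h0, mul_zero, add_zero,
      Equiv.piCongrLeft'_apply, Equiv.symm_swap]

lemma sg_invol (i : Fin (r + 2)) (j : Fin (r + 2)) : sg r i (sg r i j) = j := by
  unfold sg; split <;> simp

lemma tg_sg (i : Fin (r + 2)) (j : Fin (r + 2)) : tg r i (sg r i j) = - tg r i j := by
  unfold sg tg
  by_cases h0 : i = 0
  · simp only [if_pos h0]
    by_cases hj0 : j = 0
    · subst hj0; simp [Equiv.swap_apply_left, last_ne_zero]
    · by_cases hjL : j = Fin.last (r + 1)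
      · subst hjL; simp [Equiv.swap_apply_right, hj0]
      · simp [hj0, hjL, Equiv.swap_apply_of_ne_of_ne hj0 hjL]
  · simp [if_neg h0]

lemma gen_gen (n : ℤ) (i : Fin (r + 2)) (v : Fin (r + 2) → ℤ) :
    gen r n i (gen r n i v) = v := by
  funext j
  rw [gen_apply, gen_apply, sg_invol, tg_sg]
  ring

/-- action of generator i on roots -/
def act1 (r : ℕ) (i : Fin (r + 2)) (β : Rt r) : Rt r :=
  ⟨sg r i β.a, sg r i β.b, β.s - tg r i (sg r i β.a) + tg r i (sg r i β.b)⟩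

lemma wf_act1 (i : Fin (r + 2)) (β : Rt r) (h : wfR β) : wfR (act1 r i β) := by
  simp only [wfR, act1, ne_eq] at *
  intro hc
  exact h (by simpa using congrArg (sg r i) hc)

lemma pair_act1 (n : ℤ) (i : Fin (r + 2)) (β : Rt r) (v : Fin (r + 2) → ℤ) :
    pairR n (act1 r i β) (gen r n i v) = pairR n β v := by
  simp only [pairR, act1, gen_apply, sg_invol]
  ring



lemma sg_zero : sg r 0 = Equiv.swap 0 (Fin.last (r + 1)) := by simp [sg]

lemma sg_ne {i : Fin (r + 2)} (h : i ≠ 0) : sg r i = Equiv.swap (i - 1) i := by simp [sg, h]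

lemma tg_zero (j : Fin (r + 2)) :
    tg r 0 j = (if j = 0 then 1 else if j = Fin.last (r + 1) then -1 else 0) := by simp [tg]

lemma tg_ne {i : Fin (r + 2)} (h : i ≠ 0) (j : Fin (r + 2)) : tg r i j = 0 := by simp [tg, h]

lemma sg_inj (i : Fin (r + 2)) {x y : Fin (r + 2)} (h : sg r i x = sg r i y) : x = y := by
  have := congrArg (sg r i) h
  rwa [sg_invol, sg_invol] at this

lemma sg_eq_iff (i : Fin (r + 2)) (x y : Fin (r + 2)) : sg r i x = sg r i y ↔ x = y :=
  ⟨sg_inj i, fun h => by rw [h]⟩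

lemma swap_sg (i : Fin (r + 2)) (x y j : Fin (r + 2)) :
    Equiv.swap (sg r i x) (sg r i y) j = sg r i (Equiv.swap x y (sg r i j)) := by
  rw [Equiv.swap_apply_apply (sg r i) x y]
  simp only [Equiv.Perm.mul_apply]
  congr 1
  have : ((sg r i)⁻¹ : Equiv.Perm (Fin (r+2))) j = sg r i j := by
    apply (Equiv.Perm.eq_inv_iff_eq ..).mpr ?_ |>.symm
    exact (sg_invol i j)
  rw [this]

/-- conjugation: refl (act1 i β) ∘ gen i = gen i ∘ refl β -/
lemma conj_refl (n : ℤ) (i : Fin (r + 2)) (β : Rt r) (v : Fin (r + 2) → ℤ) :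
    reflRt n (act1 r i β) (gen r n i v) = gen r n i (reflRt n β v) := by
  funext j
  have key : ∀ k, reflRt n (act1 r i β) (gen r n i v) (sg r i k)
      = gen r n i (reflRt n β v) (sg r i k) := by
    intro k
    simp only [reflRt, act1, gen_apply, swap_sg, sg_invol, sg_eq_iff]
    by_cases hka : k = β.a
    · subst hka
      rw [Equiv.swap_apply_left, if_pos rfl, tg_sg]
      ring
    · by_cases hkb : k = β.b
      · subst hkb
        rw [Equiv.swap_apply_right, if_neg hka, if_pos rfl, tg_sg]
        ring
      · rw [Equiv.swap_apply_of_ne_of_ne hka hkb, if_neg hka, if_neg hkb]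
        ring
  have := key (sg r i j)
  rwa [sg_invol] at this

/-- the simple root of generator i -/
def srt (r : ℕ) (i : Fin (r + 2)) : Rt r :=
  if i = 0 then ⟨Fin.last (r + 1), 0, 1⟩ else ⟨i - 1, i, 0⟩

lemma srt_zero : srt r 0 = ⟨Fin.last (r + 1), 0, 1⟩ := by simp [srt]

lemma srt_ne {i : Fin (r + 2)} (h : i ≠ 0) : srt r i = ⟨i - 1, i, 0⟩ := by simp [srt, h]

lemma sub_one_val {i : Fin (r + 2)} (h : i ≠ 0) : (i - 1 : Fin (r + 2)).val = i.val - 1 := by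
  rw [Fin.coe_sub_one, if_neg h]

lemma sub_one_lt {i : Fin (r + 2)} (h : i ≠ 0) : i - 1 < i := by
  have hv : i.val ≠ 0 := Fin.val_ne_zero_iff.mpr h
  rw [Fin.lt_def, sub_one_val h]
  omega

lemma pos_srt (i : Fin (r + 2)) : posR (srt r i) := by
  by_cases h0 : i = 0
  · subst h0; rw [srt_zero]; left; exact one_pos
  · rw [srt_ne h0]; right; exact ⟨rfl, sub_one_lt h0⟩

lemma wf_srt (i : Fin (r + 2)) : wfR (srt r i) := by
  by_cases h0 : i = 0
  · subst h0; rw [srt_zero]; exact last_ne_zero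
  · rw [srt_ne h0]; exact ne_of_lt (sub_one_lt h0)

lemma refl_srt (n : ℤ) (i : Fin (r + 2)) (v : Fin (r + 2) → ℤ) :
    reflRt n (srt r i) v = gen r n i v := by
  funext j
  rw [gen_apply]
  by_cases h0 : i = 0
  · subst h0
    rw [srt_zero]
    simp only [reflRt, sg_zero, tg_zero]
    by_cases hjL : j = Fin.last (r + 1)
    · subst hjL
      rw [Equiv.swap_apply_left, Equiv.swap_apply_right]
      simp [last_ne_zero]
      ring
    · by_cases hj0 : j = 0
      · subst hj0
        rw [Equiv.swap_apply_right, Equiv.swap_apply_left]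
        simp [(last_ne_zero (r := r)).symm]
      · rw [Equiv.swap_apply_of_ne_of_ne hjL hj0, Equiv.swap_apply_of_ne_of_ne hj0 hjL]
        simp [hj0, hjL]
  · rw [srt_ne h0]
    simp only [reflRt, sg_ne h0, tg_ne h0]
    ring


lemma posR_mk (x y : Fin (r + 2)) (t : ℤ) :
    posR (⟨x, y, t⟩ : Rt r) ↔ 0 < t ∨ (t = 0 ∧ x < y) := Iff.rfl

lemma flip_srt {i : Fin (r + 2)} {β : Rt r} (hp : posR β) (hwf : wfR β)
    (hneg : ¬ posR (act1 r i β)) : β = srt r i := by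
  obtain ⟨a, b, s⟩ := β
  have haL := a.isLt
  have hbL := b.isLt
  have hwf' : a ≠ b := hwf
  have hL0 : (Fin.last (r + 1) : Fin (r + 2)) ≠ 0 := last_ne_zero
  have hLv : (Fin.last (r + 1) : Fin (r + 2)).val = r + 1 := rfl
  have hz : ((0 : Fin (r + 2)) : ℕ) = 0 := rfl
  simp only [posR_mk] at hp
  by_cases h0 : i = 0
  · subst h0
    rw [srt_zero]
    simp only [act1, sg_zero, tg_zero, posR_mk] at hneg
    -- normalize hp to 0 ≤ s info later; case on a
    by_cases ha0 : a = 0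
    · subst ha0
      have hs0 : 0 ≤ s := by
        rcases hp with h | ⟨h, _⟩ <;> omega
      rw [Equiv.swap_apply_left, if_neg hL0, if_pos rfl] at hneg
      by_cases hbL' : b = Fin.last (r + 1)
      · subst hbL'
        rw [Equiv.swap_apply_right, if_pos rfl] at hneg
        exact absurd (Or.inl (by omega)) hneg
      · have hb0 : b ≠ 0 := fun h => hwf' h.symm
        rw [Equiv.swap_apply_of_ne_of_ne hb0 hbL', if_neg hb0, if_neg hbL'] at hneg
        exact absurd (Or.inl (by omega)) hneg
    · by_cases haL' : a = Fin.last (r + 1)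
      · subst haL'
        -- a = last; then in hp only s > 0 possible unless a < b with b ≤ last
        have hs1 : 0 < s := by
          rcases hp with h | ⟨h, hab⟩
          · exact h
          · exfalso
            rw [Fin.lt_def, hLv] at hab
            omega
        rw [Equiv.swap_apply_right, if_pos rfl] at hneg
        by_cases hb0 : b = 0
        · subst hb0
          rw [Equiv.swap_apply_left, if_neg hL0, if_pos rfl] at hneg
          -- act1 = ⟨0, last, s - 1 - 1⟩
          have hLpos : (0 : Fin (r + 2)) < Fin.last (r + 1) := by
            rw [Fin.lt_def, hLv]; omega
          obtain ⟨h1, h2⟩ := not_or.mp hneg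
          have h2' : s - 1 + -1 ≠ 0 := fun h => h2 ⟨h, hLpos⟩
          have hs2 : s = 1 := by omega
          rw [hs2]
        · have hbL'2 : b ≠ Fin.last (r + 1) := fun h => hwf' (by rw [h])
          rw [Equiv.swap_apply_of_ne_of_ne hb0 hbL'2, if_neg hb0, if_neg hbL'2] at hneg
          exfalso
          apply hneg
          by_cases hs : s = 1
          · right
            constructor
            · omega
            · rw [Fin.lt_def]
              have : b.val ≠ 0 := Fin.val_ne_zero_iff.mpr hb0
              omega
          · left; omega
      · -- a ∉ {0, last}
        rw [Equiv.swap_apply_of_ne_of_ne ha0 haL', if_neg ha0, if_neg haL'] at hneg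
        by_cases hb0 : b = 0
        · subst hb0
          have hs1 : 0 < s := by
            rcases hp with h | ⟨h, hab⟩
            · exact h
            · exfalso; rw [Fin.lt_def] at hab; omega
          rw [Equiv.swap_apply_left, if_neg hL0, if_pos rfl] at hneg
          exfalso
          apply hneg
          by_cases hs : s = 1
          · right
            refine ⟨by omega, ?_⟩
            rw [Fin.lt_def, hLv]
            have : a.val ≠ r + 1 := by simpa [Fin.ext_iff, hLv] using haL'
            omega
          · left; omega
        · by_cases hbL' : b = Fin.last (r + 1)
          · subst hbL'
            rw [Equiv.swap_apply_right, if_pos rfl] at hneg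
            have hs0 : 0 ≤ s := by
              rcases hp with h | ⟨h, _⟩ <;> omega
            exact absurd (Or.inl (by omega)) hneg
          · rw [Equiv.swap_apply_of_ne_of_ne hb0 hbL', if_neg hb0, if_neg hbL'] at hneg
            exact absurd (by rwa [show s - 0 + 0 = s by ring]) hneg
  · -- i ≠ 0 : swap of i-1 and i
    rw [srt_ne h0]
    simp only [act1, sg_ne h0, tg_ne h0, posR_mk, sub_zero, add_zero] at hneg
    have hiv : i.val ≠ 0 := Fin.val_ne_zero_iff.mpr h0
    have hcv : (i - 1 : Fin (r + 2)).val = i.val - 1 := sub_one_val h0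
    have hi := i.isLt
    rcases hp with hs | ⟨hs, hab⟩
    · exact absurd (Or.inl hs) hneg
    · subst hs
      rw [Fin.lt_def] at hab
      simp only [Rt.mk.injEq]
      by_cases hac : a = i - 1 <;> by_cases hbi : b = i
      · exact ⟨hac, hbi, trivial⟩
      · exfalso
        have hav : a.val = (i - 1 : Fin (r + 2)).val := congrArg Fin.val hac
        have hbc : b ≠ i - 1 := fun h => hwf' (hac.trans h.symm)
        have hbv : b.val ≠ i.val := fun h => hbi (Fin.ext h)
        rw [hac, Equiv.swap_apply_left, Equiv.swap_apply_of_ne_of_ne hbc hbi] at hneg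
        exact hneg (Or.inr ⟨rfl, by rw [Fin.lt_def]; omega⟩)
      · exfalso
        by_cases hai : a = i
        · exact hwf' (hai.trans hbi.symm)
        · have hbv : b.val = i.val := congrArg Fin.val hbi
          have hav : a.val ≠ (i - 1 : Fin (r + 2)).val := fun h => hac (Fin.ext h)
          rw [hbi, Equiv.swap_apply_of_ne_of_ne hac hai, Equiv.swap_apply_right] at hneg
          exact hneg (Or.inr ⟨rfl, by rw [Fin.lt_def]; rw [hcv] at hav ⊢; omega⟩)
      · exfalso
        by_cases hai : a = i
        · have hav : a.val = i.val := congrArg Fin.val hai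
          by_cases hbc : b = i - 1
          · have hbv : b.val = (i - 1 : Fin (r + 2)).val := congrArg Fin.val hbc
            rw [hcv] at hbv
            omega
          · rw [hai, Equiv.swap_apply_right, Equiv.swap_apply_of_ne_of_ne hbc hbi] at hneg
            exact hneg (Or.inr ⟨rfl, by rw [Fin.lt_def, hcv]; omega⟩)
        · rw [Equiv.swap_apply_of_ne_of_ne hac hai] at hneg
          by_cases hbc : b = i - 1
          · have hbv : b.val = (i - 1 : Fin (r + 2)).val := congrArg Fin.val hbc
            rw [hcv] at hbv
            rw [hbc, Equiv.swap_apply_left] at hneg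
            exact hneg (Or.inr ⟨rfl, by rw [Fin.lt_def]; omega⟩)
          · rw [Equiv.swap_apply_of_ne_of_ne hbc hbi] at hneg
            exact hneg (Or.inr ⟨rfl, Fin.lt_def.mpr hab⟩)


lemma act1_invol (i : Fin (r + 2)) (β : Rt r) : act1 r i (act1 r i β) = β := by
  obtain ⟨a, b, s⟩ := β
  simp only [act1, sg_invol, tg_sg, Rt.mk.injEq]
  refine ⟨trivial, trivial, by ring⟩

lemma conj_refl' (n : ℤ) (i : Fin (r + 2)) (β : Rt r) (v : Fin (r + 2) → ℤ) :
    reflRt n β (gen r n i v) = gen r n i (reflRt n (act1 r i β) v) := by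
  have := conj_refl n i (act1 r i β) v
  rwa [act1_invol] at this

def wprod (r : ℕ) (n : ℤ) (l : List (Fin (r + 2))) : Equiv.Perm (Fin (r + 2) → ℤ) :=
  (l.map (gen r n)).prod

lemma wprod_nil (n : ℤ) (v : Fin (r + 2) → ℤ) : wprod r n [] v = v := rfl

lemma wprod_cons (n : ℤ) (i : Fin (r + 2)) (l : List (Fin (r + 2))) (v : Fin (r + 2) → ℤ) :
    wprod r n (i :: l) v = gen r n i (wprod r n l v) := by
  simp [wprod, Equiv.Perm.mul_apply]

def invAct (r : ℕ) (l : List (Fin (r + 2))) (β : Rt r) : Rt r :=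
  l.foldl (fun γ j => act1 r j γ) β

lemma invAct_nil (β : Rt r) : invAct r [] β = β := rfl

lemma invAct_cons (i : Fin (r + 2)) (l : List (Fin (r + 2))) (β : Rt r) :
    invAct r (i :: l) β = invAct r l (act1 r i β) := rfl

lemma wf_invAct (l : List (Fin (r + 2))) (β : Rt r) (h : wfR β) : wfR (invAct r l β) := by
  induction l generalizing β with
  | nil => exact h
  | cons i l ih => exact ih _ (wf_act1 i β h)

lemma pair_invAct (n : ℤ) (l : List (Fin (r + 2))) (β : Rt r) (v : Fin (r + 2) → ℤ) :
    pairR n (invAct r l β) v = pairR n β (wprod r n l v) := by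
  induction l generalizing β with
  | nil => rw [invAct_nil, wprod_nil]
  | cons i l ih =>
      rw [invAct_cons, ih, wprod_cons]
      have := pair_act1 n i β (wprod r n l v)
      calc pairR n (act1 r i β) (wprod r n l v)
          = pairR n (act1 r i β) (gen r n i (gen r n i (wprod r n l v))) := by rw [gen_gen]
        _ = pairR n β (gen r n i (wprod r n l v)) := pair_act1 n i β _

/-- Strong exchange, word form. -/
lemma strong_exchange (n : ℤ) (l : List (Fin (r + 2))) (β : Rt r) (hwf : wfR β)
    (hp : posR β) (hneg : ¬ posR (invAct r l β)) :
    ∃ j < l.length, ∀ v, reflRt n β (wprod r n l v) = wprod r n (l.eraseIdx j) v := by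
  induction l generalizing β with
  | nil => exact absurd hp (by rwa [invAct_nil] at hneg)
  | cons i l ih =>
      rw [invAct_cons] at hneg
      by_cases hp1 : posR (act1 r i β)
      · obtain ⟨j, hj, hW⟩ := ih (act1 r i β) (wf_act1 i β hwf) hp1 hneg
        refine ⟨j + 1, by simpa using hj, fun v => ?_⟩
        rw [List.eraseIdx_cons_succ, wprod_cons, wprod_cons, conj_refl' n i β, hW]
      · have hβ : β = srt r i := flip_srt hp hwf hp1
        refine ⟨0, Nat.succ_pos _, fun v => ?_⟩
        rw [List.eraseIdx_cons_zero, wprod_cons, hβ, refl_srt, gen_gen]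

lemma inA_nonneg {n : ℤ} (hn : 0 < n) {lam : Fin (r + 2) → ℤ} (h : inA r n lam)
    {γ : Rt r} (hγ : posR γ) : 0 ≤ pairR n γ lam := by
  obtain ⟨hmono, hgap⟩ := h
  rcases hγ with hs | ⟨hs, hab⟩
  · have h1 : lam γ.a ≥ lam (Fin.last (r + 1)) := hmono γ.a (Fin.last (r + 1)) (Fin.le_last _)
    have h2 : lam γ.b ≤ lam 0 := hmono 0 γ.b (Fin.zero_le _)
    have h3 : (1 : ℤ) * n ≤ γ.s * n := by
      apply mul_le_mul_of_nonneg_right _ (le_of_lt hn)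
      omega
    unfold pairR
    linarith
  · have := hmono γ.a γ.b (le_of_lt hab)
    unfold pairR
    rw [hs]
    linarith

lemma not_pos_of_pair_neg {n : ℤ} (hn : 0 < n) {lam : Fin (r + 2) → ℤ} (h : inA r n lam)
    {γ : Rt r} (hγ : pairR n γ lam < 0) : ¬ posR γ :=
  fun hp => absurd hγ (not_lt.mpr (inA_nonneg hn h hp))

lemma pair_refl (n : ℤ) (β : Rt r) (hwf : wfR β) (v : Fin (r + 2) → ℤ) :
    pairR n β (reflRt n β v) = - pairR n β v := by
  have hba : β.b ≠ β.a := fun h => hwf h.symm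
  simp [pairR, reflRt, Equiv.swap_apply_left, Equiv.swap_apply_right, if_neg hba]
  ring

lemma refl_invol (n : ℤ) (β : Rt r) (hwf : wfR β) (v : Fin (r + 2) → ℤ) :
    reflRt n β (reflRt n β v) = v := by
  have hba : β.b ≠ β.a := fun h => hwf h.symm
  funext j
  simp only [reflRt]
  by_cases hja : j = β.a
  · subst hja
    rw [Equiv.swap_apply_left]
    simp [if_neg hba, Equiv.swap_apply_right]
    try ring
  · by_cases hjb : j = β.b
    · subst hjb
      rw [Equiv.swap_apply_right]
      simp [if_neg hba, if_neg hja, Equiv.swap_apply_left]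
      try ring
    · rw [Equiv.swap_apply_of_ne_of_ne hja hjb]
      simp only [if_neg hja, if_neg hjb]
      rw [Equiv.swap_apply_of_ne_of_ne hja hjb]
      ring

lemma refl_fix_iff {n : ℤ} (hn : 0 < n) (β : Rt r) (hwf : wfR β) (v : Fin (r + 2) → ℤ) :
    reflRt n β v = v ↔ pairR n β v = 0 := by
  have hba : β.b ≠ β.a := fun h => hwf h.symm
  constructor
  · intro h
    have ha := congrFun h β.a
    simp [reflRt, Equiv.swap_apply_left] at ha
    unfold pairR
    omega
  · intro h
    unfold pairR at h
    funext j
    simp only [reflRt]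
    by_cases hja : j = β.a
    · subst hja
      rw [Equiv.swap_apply_left, if_pos rfl]
      omega
    · by_cases hjb : j = β.b
      · subst hjb
        rw [Equiv.swap_apply_right, if_neg hja, if_pos rfl]
        omega
      · rw [Equiv.swap_apply_of_ne_of_ne hja hjb, if_neg hja, if_neg hjb]
        ring


def P1 (v : Fin (r + 2) → ℤ) : ℤ := ∑ j, (v j) ^ 2
def P2 (v : Fin (r + 2) → ℤ) : ℤ := ∑ j, (j.val : ℤ) * v j

lemma P1_nonneg (v : Fin (r + 2) → ℤ) : 0 ≤ P1 v :=
  Finset.sum_nonneg fun j _ => sq_nonneg _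

lemma sq_le_P1 (v : Fin (r + 2) → ℤ) (j : Fin (r + 2)) : (v j) ^ 2 ≤ P1 v :=
  Finset.single_le_sum (fun k _ => sq_nonneg (v k)) (Finset.mem_univ j)

lemma P1_zero {v : Fin (r + 2) → ℤ} (h : P1 v ≤ 0) (j : Fin (r + 2)) : v j = 0 := by
  have h1 := sq_le_P1 v j
  have h2 := sq_nonneg (v j)
  nlinarith [sq_nonneg (v j), h1, h2, P1_nonneg v]

lemma sum_support_pair {c d : Fin (r + 2)} (hcd : c ≠ d) (g : Fin (r + 2) → ℤ)
    (h : ∀ j, j ≠ c → j ≠ d → g j = 0) : ∑ j, g j = g c + g d := by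
  rw [← Finset.sum_subset (Finset.subset_univ ({c, d} : Finset (Fin (r + 2))))]
  · rw [Finset.sum_pair hcd]
  · intro x _ hx
    simp only [Finset.mem_insert, Finset.mem_singleton, not_or] at hx
    exact h x hx.1 hx.2

lemma P2_bound (v : Fin (r + 2) → ℤ) : 0 ≤ P2 v + (r + 2) ^ 2 * (P1 v + 1) := by
  have key : ∀ j : Fin (r + 2), -((r + 2) : ℤ) * (P1 v + 1) ≤ (j.val : ℤ) * v j := by
    intro j
    have h1 := sq_le_P1 v j
    have h2 : (j.val : ℤ) ≤ (r + 2 : ℤ) := by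
      have := j.isLt
      omega
    have h3 : (0 : ℤ) ≤ (j.val : ℤ) := Int.ofNat_nonneg _
    have h4 : -(P1 v + 1) ≤ v j := by nlinarith
    have h5 : 0 ≤ P1 v + 1 := by have := P1_nonneg v; omega
    nlinarith
  have hsum : ∑ _j : Fin (r + 2), (-((r + 2) : ℤ) * (P1 v + 1)) ≤ P2 v :=
    Finset.sum_le_sum (fun j _ => key j)
  rw [Finset.sum_const, Finset.card_univ, Fintype.card_fin, nsmul_eq_mul] at hsum
  push_cast at hsum ⊢
  nlinarith [hsum]

lemma swap_potentials {n : ℤ} {i : Fin (r + 2)} (h0 : i ≠ 0) (v : Fin (r + 2) → ℤ) :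
    P1 (gen r n i v) = P1 v ∧ P2 (gen r n i v) = P2 v + v (i - 1) - v i := by
  have hv' : ∀ j, gen r n i v j = v (sg r i j) := by
    intro j; rw [gen_apply, tg_ne h0]; ring
  have hci : (i - 1 : Fin (r + 2)) ≠ i := ne_of_lt (sub_one_lt h0)
  have hiv : i.val ≠ 0 := Fin.val_ne_zero_iff.mpr h0
  have hcv : (i - 1 : Fin (r + 2)).val = i.val - 1 := sub_one_val h0
  constructor
  · unfold P1
    refine Fintype.sum_equiv (sg r i) _ _ (fun x => ?_)
    rw [hv']
  · have e1 : P2 (gen r n i v) = ∑ y, (((sg r i y).val : ℤ)) * v y := by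
      unfold P2
      refine Fintype.sum_equiv (sg r i) _ _ (fun x => ?_)
      rw [hv', sg_invol]
    have e2 : P2 (gen r n i v) - P2 v = ∑ y, ((((sg r i y).val : ℤ)) - (y.val : ℤ)) * v y := by
      rw [e1]
      unfold P2
      rw [← Finset.sum_sub_distrib]
      congr 1
      funext y
      ring
    have e3 : ∑ y, ((((sg r i y).val : ℤ)) - (y.val : ℤ)) * v y
        = v (i - 1) - v i := by
      rw [sum_support_pair hci _ ?_]
      · rw [sg_ne h0, Equiv.swap_apply_left, Equiv.swap_apply_right, hcv]
        have : (i.val : ℤ) - ((i.val : ℤ) - 1) = 1 ∧ (((i.val - 1 : ℕ) : ℤ)) - i.val = -1 := by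
          omega
        rw [show (((i.val - 1 : ℕ) : ℤ)) = (i.val : ℤ) - 1 by omega]
        ring
      · intro j hj1 hj2
        rw [sg_ne h0, Equiv.swap_apply_of_ne_of_ne hj1 hj2]
        ring
    omega

lemma aff_potentials {n : ℤ} (v : Fin (r + 2) → ℤ) :
    P1 (gen r n 0 v) = P1 v - 2 * n * (v 0 - v (Fin.last (r + 1)) - n) := by
  have hv' : ∀ j, gen r n 0 v j = v (sg r 0 j) + n * tg r 0 j := fun j => gen_apply n 0 v j
  have e1 : P1 (gen r n 0 v) = ∑ y, (v y - n * tg r 0 y) ^ 2 := by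
    unfold P1
    refine Fintype.sum_equiv (sg r 0) _ _ (fun x => ?_)
    rw [hv', tg_sg]
    ring
  have e2 : P1 (gen r n 0 v) - P1 v = ∑ y, ((- 2 * n * tg r 0 y * v y) + n ^ 2 * (tg r 0 y) ^ 2) := by
    rw [e1]
    unfold P1
    rw [← Finset.sum_sub_distrib]
    congr 1
    funext y
    ring
  have e3 : ∑ y, ((- 2 * n * tg r 0 y * v y) + n ^ 2 * (tg r 0 y) ^ 2)
      = (- 2 * n * v 0 + n ^ 2) + (2 * n * v (Fin.last (r + 1)) + n ^ 2) := by
    rw [sum_support_pair (c := 0) (d := Fin.last (r + 1)) (Ne.symm last_ne_zero) _ ?_]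
    · rw [tg_zero, tg_zero, if_pos rfl, if_neg last_ne_zero, if_pos rfl]
      ring
    · intro j hj0 hjL
      rw [tg_zero, if_neg hj0, if_neg hjL]
      ring
  rw [e3] at e2
  linarith

lemma adj_mono {v : Fin (r + 2) → ℤ} (h : ∀ i : Fin (r + 2), i ≠ 0 → v i ≤ v (i - 1)) :
    ∀ i j : Fin (r + 2), i ≤ j → v j ≤ v i := by
  have key : ∀ (d : ℕ) (j : Fin (r + 2)) (hd : d ≤ j.val),
      v j ≤ v ⟨j.val - d, by omega⟩ := by
    intro d
    induction d with
    | zero =>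
        intro j _
        have : (⟨j.val - 0, by omega⟩ : Fin (r + 2)) = j := by
          apply Fin.ext; simp
        rw [this]
    | succ d ih =>
        intro j hd
        have hd' : d ≤ j.val := by omega
        refine le_trans (ih j hd') ?_
        set i' : Fin (r + 2) := ⟨j.val - d, by omega⟩ with hi'
        have hne : i' ≠ 0 := by
          intro hc
          have hcc := congrArg Fin.val hc
          have h00 : ((0 : Fin (r + 2)) : ℕ) = 0 := rfl
          simp only [hi'] at hcc
          omega
        have := h i' hne
        have hsub : (i' - 1 : Fin (r + 2)) = ⟨j.val - (d + 1), by omega⟩ := by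
          apply Fin.ext
          rw [sub_one_val hne]
          simp [hi']
          omega
        rwa [hsub] at this
  intro i j hij
  have hij' : i.val ≤ j.val := hij
  have := key (j.val - i.val) j (by omega)
  have heq : (⟨j.val - (j.val - i.val), by omega⟩ : Fin (r + 2)) = i := by
    apply Fin.ext; simp; omega
  rwa [heq] at this

lemma violation {n : ℤ} {v : Fin (r + 2) → ℤ} (h : ¬ inA r n v) :
    (∃ i : Fin (r + 2), i ≠ 0 ∧ v (i - 1) < v i) ∨ n < v 0 - v (Fin.last (r + 1)) := by
  by_cases hg : n < v 0 - v (Fin.last (r + 1))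
  · exact Or.inr hg
  · left
    by_contra hc
    push_neg at hc
    exact h ⟨adj_mono (fun i hi => hc i hi), by omega⟩


def m2 (v : Fin (r + 2) → ℤ) : ℕ := (P2 v + ((r : ℤ) + 2) ^ 2 * (P1 v + 1)).toNat

lemma step {n : ℤ} (hn : 0 < n) (v : Fin (r + 2) → ℤ)
    (IH : ∀ v' : Fin (r + 2) → ℤ, (P1 v' < P1 v ∨ (P1 v' = P1 v ∧ P2 v' < P2 v)) →
      ∃ lam l, inA r n lam ∧ wprod r n l lam = v') :
    ∃ lam l, inA r n lam ∧ wprod r n l lam = v := by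
  by_cases hA : inA r n v
  · exact ⟨v, [], hA, rfl⟩
  · rcases violation hA with ⟨i, hi0, hlt⟩ | hgap
    · obtain ⟨hp1, hp2⟩ := swap_potentials (n := n) hi0 v
      obtain ⟨lam, l, hA', hl⟩ := IH (gen r n i v) (Or.inr ⟨hp1, by omega⟩)
      exact ⟨lam, i :: l, hA', by rw [wprod_cons, hl, gen_gen]⟩
    · have hp1 := aff_potentials (n := n) v
      obtain ⟨lam, l, hA', hl⟩ := IH (gen r n 0 v) (Or.inl (by nlinarith))
      exact ⟨lam, 0 :: l, hA', by rw [wprod_cons, hl, gen_gen]⟩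

lemma to_domain {n : ℤ} (hn : 0 < n) (v : Fin (r + 2) → ℤ) :
    ∃ lam l, inA r n lam ∧ wprod r n l lam = v := by
  suffices H : ∀ (k1 k2 : ℕ) (v : Fin (r + 2) → ℤ), (P1 v).toNat ≤ k1 → m2 v ≤ k2 →
      ∃ lam l, inA r n lam ∧ wprod r n l lam = v from
    H (P1 v).toNat (m2 v) v le_rfl le_rfl
  intro k1
  induction k1 with
  | zero =>
      intro k2 v h1 _
      have hP : P1 v ≤ 0 := by omega
      have hv : ∀ j, v j = 0 := P1_zero hP
      exact ⟨v, [], ⟨fun i j _ => by rw [hv i, hv j],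
        by rw [hv 0, hv (Fin.last (r + 1))]; omega⟩, rfl⟩
  | succ k1 ih1 =>
      intro k2
      induction k2 with
      | zero =>
          intro v h1 h2
          apply step hn v
          intro v' hd
          rcases hd with hlt | ⟨heq, hlt⟩
          · exact ih1 (m2 v') v' (by omega) le_rfl
          · exfalso
            have hb := P2_bound v'
            have hb2 := P2_bound v
            rw [heq] at hb
            unfold m2 at h2
            set E := ((r : ℤ) + 2) ^ 2 * (P1 v + 1) with hE
            omega
      | succ k2 ih2 =>
          intro v h1 h2
          apply step hn v
          intro v' hd
          rcases hd with hlt | ⟨heq, hlt⟩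
          · exact ih1 (m2 v') v' (by omega) le_rfl
          · refine ih2 v' (by omega) ?_
            have hb := P2_bound v'
            rw [heq] at hb
            unfold m2 at h2 ⊢
            rw [heq]
            set E := ((r : ℤ) + 2) ^ 2 * (P1 v + 1) with hE
            omega

lemma exists_min {n : ℤ} (lam v : Fin (r + 2) → ℤ) (h : ∃ l, wprod r n l lam = v) :
    ∃ l, wprod r n l lam = v ∧ ∀ l', wprod r n l' lam = v → l.length ≤ l'.length := by
  classical
  obtain ⟨l0, hl0⟩ := h
  have hex : ∃ k, ∃ l : List (Fin (r + 2)), l.length = k ∧ wprod r n l lam = v :=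
    ⟨l0.length, l0, rfl, hl0⟩
  obtain ⟨l, hlen, hl⟩ := Nat.find_spec hex
  refine ⟨l, hl, fun l' hl' => ?_⟩
  have := Nat.find_min' hex (m := l'.length) ⟨l', rfl, hl'⟩
  omega

lemma word_exchange {n : ℤ} (hn : 0 < n) {lam : Fin (r + 2) → ℤ} (hA : inA r n lam)
    (l : List (Fin (r + 2))) {β : Rt r} (hwf : wfR β) (hpβ : posR β)
    (hpair : pairR n β (wprod r n l lam) < 0) :
    ∃ l', l'.Sublist l ∧ l'.length + 1 = l.length ∧
      wprod r n l' lam = reflRt n β (wprod r n l lam) := by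
  have hneg : ¬ posR (invAct r l β) :=
    not_pos_of_pair_neg hn hA (by rw [pair_invAct]; exact hpair)
  obtain ⟨j, hj, hW⟩ := strong_exchange n l β hwf hpβ hneg
  refine ⟨l.eraseIdx j, List.eraseIdx_sublist l j, ?_, (hW lam).symm⟩
  rw [List.length_eraseIdx, if_pos hj]
  omega

/-- Claim D: any word from lam contains a sublist which is a minimal word to the same point. -/
lemma min_sub {n : ℤ} (hn : 0 < n) {lam : Fin (r + 2) → ℤ} (hA : inA r n lam) :
    ∀ l : List (Fin (r + 2)),
      ∃ l', l'.Sublist l ∧ wprod r n l' lam = wprod r n l lam ∧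
        ∀ l'', wprod r n l'' lam = wprod r n l lam → l'.length ≤ l''.length := by
  intro l
  induction l with
  | nil => exact ⟨[], List.Sublist.refl _, rfl, fun l'' _ => Nat.zero_le _⟩
  | cons i l ih =>
      obtain ⟨m, hmsub, hmeq, hmmin⟩ := ih
      have hν : wprod r n (i :: l) lam = gen r n i (wprod r n l lam) := wprod_cons n i l lam
      rcases lt_trichotomy (pairR n (srt r i) (wprod r n l lam)) 0 with hlt | heq | hgt
      · -- exchange on m
        have hpm : pairR n (srt r i) (wprod r n m lam) < 0 := by rw [hmeq]; exact hlt
        obtain ⟨l', hsub', hlen', hval'⟩ := word_exchange hn hA m (wf_srt i) (pos_srt i) hpm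
        have hval : wprod r n l' lam = wprod r n (i :: l) lam := by
          rw [hval', hmeq, refl_srt, hν]
        refine ⟨l', hsub'.trans (hmsub.trans (List.sublist_cons_self i l)), hval, ?_⟩
        intro l'' h''
        -- i :: l'' is a word to wprod l lam
        have h2 : wprod r n (i :: l'') lam = wprod r n l lam := by
          rw [wprod_cons, h'', hν, gen_gen]
        have := hmmin (i :: l'') h2
        simp only [List.length_cons] at this
        omega
      · -- fixed point
        have hfix : reflRt n (srt r i) (wprod r n l lam) = wprod r n l lam :=
          (refl_fix_iff hn (srt r i) (wf_srt i) _).mpr heq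
        rw [refl_srt] at hfix
        have hsame : wprod r n (i :: l) lam = wprod r n l lam := by rw [hν, hfix]
        refine ⟨m, hmsub.trans (List.sublist_cons_self i l), by rw [hsame, hmeq], ?_⟩
        intro l'' h''
        exact hmmin l'' (by rw [h'', hsame])
      · -- minimal word is i :: m
        refine ⟨i :: m, hmsub.cons₂ i, by rw [wprod_cons, hmeq, hν], ?_⟩
        intro l'' h''
        by_contra hlen
        push_neg at hlen
        simp only [List.length_cons] at hlen
        have hexu : ∃ u, wprod r n u lam = wprod r n (i :: l) lam := ⟨l'', h''⟩
        obtain ⟨u, hu, humin⟩ := exists_min lam _ hexu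
        have hpair' : pairR n (srt r i) (wprod r n u lam) < 0 := by
          rw [hu, hν, ← refl_srt n i, pair_refl n _ (wf_srt i)]
          omega
        obtain ⟨u', hsubu, hlenu, hvalu⟩ := word_exchange hn hA u (wf_srt i) (pos_srt i) hpair'
        have hval2 : wprod r n u' lam = wprod r n l lam := by
          rw [hvalu, hu, hν, ← refl_srt n i, refl_invol n _ (wf_srt i)]
        have h3 := hmmin u' hval2
        have h4 := humin l'' h''
        omega

end Stmt10

/-- for μ ∈ ℤʳ and a positive affine root α̂ = n(ε_a − ε_b) + sn²δ
(i.e. (s = 0 and a < b) or s > 0), one has s_{α̂}μ <ₙ μ iff ⟨α̂, μ⟩ < 0. -/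
theorem stmt10 (r n : ℕ) (hn : 0 < n) (μ : Fin (r + 2) → ℤ)
    (a b : Fin (r + 2)) (hab : a ≠ b) (s : ℤ)
    (hpos : (s = 0 ∧ a < b) ∨ 0 < s) :
    (leN r n (reflAff r n a b s μ) μ ∧ reflAff r n a b s μ ≠ μ) ↔
      (n : ℤ) * (μ a - μ b) + s * (n : ℤ) ^ 2 < 0 := by
  have hn' : (0 : ℤ) < (n : ℤ) := by exact_mod_cast hn
  set β : Stmt10.Rt r := ⟨a, b, s⟩ with hβ
  have hwfβ : Stmt10.wfR β := hab
  have hposβ : Stmt10.posR β := by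
    rcases hpos with ⟨h1, h2⟩ | h
    · exact Or.inr ⟨h1, h2⟩
    · exact Or.inl h
  have hrefl : reflAff r (n : ℤ) a b s μ = Stmt10.reflRt (n : ℤ) β μ := rfl
  have hprod : (n : ℤ) * Stmt10.pairR (n : ℤ) β μ
      = (n : ℤ) * (μ a - μ b) + s * (n : ℤ) ^ 2 := by
    show (n : ℤ) * (μ a - μ b + s * (n : ℤ)) = _
    ring
  have hiff : ((n : ℤ) * (μ a - μ b) + s * (n : ℤ) ^ 2 < 0) ↔
      Stmt10.pairR (n : ℤ) β μ < 0 := by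
    rw [← hprod]
    constructor
    · intro h
      by_contra hc
      push_neg at hc
      exact absurd h (not_lt.mpr (mul_nonneg hn'.le hc))
    · intro h
      exact mul_neg_of_pos_of_neg hn' h
  rw [hiff]
  constructor
  · rintro ⟨hle, hne⟩
    by_contra hge
    push_neg at hge
    have hne0 : Stmt10.pairR (n : ℤ) β μ ≠ 0 := by
      intro h
      exact hne (by rw [hrefl, (Stmt10.refl_fix_iff hn' β hwfβ μ).mpr h])
    have hgt : 0 < Stmt10.pairR (n : ℤ) β μ := lt_of_le_of_ne hge (Ne.symm hne0)
    obtain ⟨lam, lν, lμ, hA, ⟨hν1, hν2⟩, ⟨hμ1, hμ2⟩, hbr⟩ := hle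
    obtain ⟨L, ⟨hLprod, hLmin⟩, L', hL'sub, hL'prod⟩ := hbr
    -- length comparison: |lν| ≤ |lμ|
    have hlen1 : lν.length ≤ L'.length := by
      apply hν2
      show Stmt10.wprod r (n : ℤ) L' lam = _
      rw [show Stmt10.wprod r (n : ℤ) L' = Stmt10.wprod r (n : ℤ) lν from hL'prod]
      exact hν1
    have hlen2 : L'.length ≤ L.length := hL'sub.length_le
    have hlen3 : L.length ≤ lμ.length := hLmin lμ rfl
    -- exchange at ν
    have hν1' : Stmt10.wprod r (n : ℤ) lν lam = Stmt10.reflRt (n : ℤ) β μ := by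
      rw [← hrefl]; exact hν1
    have hpairν : Stmt10.pairR (n : ℤ) β (Stmt10.wprod r (n : ℤ) lν lam) < 0 := by
      rw [hν1', Stmt10.pair_refl (n : ℤ) β hwfβ]
      omega
    obtain ⟨l', hsub', hlen', hval'⟩ :=
      Stmt10.word_exchange hn' hA lν hwfβ hposβ hpairν
    have hval2 : Stmt10.wprod r (n : ℤ) l' lam = μ := by
      rw [hval', hν1', Stmt10.refl_invol (n : ℤ) β hwfβ]
    have := hμ2 l' hval2
    omega
  · intro hlt
    -- forward: construct leN
    obtain ⟨lam, l0, hA, hl0⟩ := Stmt10.to_domain hn' μ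
    obtain ⟨lμ, hlμ, hlμmin⟩ := Stmt10.exists_min lam μ ⟨l0, hl0⟩
    have hpairμ : Stmt10.pairR (n : ℤ) β (Stmt10.wprod r (n : ℤ) lμ lam) < 0 := by
      rw [hlμ]; exact hlt
    obtain ⟨l', hsub', hlen', hval'⟩ :=
      Stmt10.word_exchange hn' hA lμ hwfβ hposβ hpairμ
    obtain ⟨lν, hsubν, hνeq, hνmin⟩ := Stmt10.min_sub hn' hA l'
    have hval'' : Stmt10.wprod r (n : ℤ) l' lam = reflAff r (n : ℤ) a b s μ := by
      rw [hval', hlμ, hrefl]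
    constructor
    · refine ⟨lam, lν, lμ, hA, ⟨?_, ?_⟩, ⟨hlμ, hlμmin⟩, ?_⟩
      · show Stmt10.wprod r (n : ℤ) lν lam = _
        rw [hνeq, hval'']
      · intro l'' h''
        apply hνmin
        show Stmt10.wprod r (n : ℤ) l'' lam = _
        rw [hval'']
        exact h''
      · refine ⟨lμ, ⟨rfl, ?_⟩, lν, hsubν.trans hsub', rfl⟩
        intro l'' h''
        apply hlμmin
        show Stmt10.wprod r (n : ℤ) l'' lam = μ
        rw [show Stmt10.wprod r (n : ℤ) l'' = Stmt10.wprod r (n : ℤ) lμ from h'']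
        exact hlμ
    · intro h
      rw [hrefl] at h
      have := (Stmt10.refl_fix_iff hn' β hwfβ μ).mp h
      omega
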